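/- Let n ≥ 2, m ≥ 1, q ∈ [1,∞) and r > 0. Let f ∈ L^q(B_r(0); ℝ^m) satisfy f(x′, x_n) = f(x′, −x_n) for a.e. (x′, x_n) ∈ B_r(0) (f is even in the last coordinate). Then (⨍_{B_r(0)} |f − ⟨f⟩_{B_r(0)}|^q dx)^{1/q} ≤ 2 (⨍_{B_r^+(0)} |f − ⟨f⟩_{B_r^+(0)}|^q dx)^{1/q} and (⨍_{B_r^+(0)} |f − ⟨f⟩_{B_r^+(0)}|^q dx)^{1/q} ≤ 2 (⨍_{B_r(0)} |f − ⟨f⟩_{B_r(0)}|^q dx)^{1/q}. -/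

import Mathlib

open MeasureTheory Metric

/-- Reflection of a point of `ℝⁿ` in its last coordinate. -/
noncomputable def reflectLast (n : ℕ) (x : EuclideanSpace ℝ (Fin n)) :
    EuclideanSpace ℝ (Fin n) :=
  WithLp.toLp 2 (fun i : Fin n => if (i : ℕ) = n - 1 then -(x i) else x i)

/-- The open upper half-ball `B_r^+(0) = {x ∈ B_r(0) : x_n > 0}` in `ℝⁿ`. -/
noncomputable def upperHalfBall (n : ℕ) (hn : 0 < n) (r : ℝ) :
    Set (EuclideanSpace ℝ (Fin n)) :=
  {x | x ∈ Metric.ball 0 r ∧ 0 < x ⟨n - 1, Nat.sub_lt hn one_pos⟩}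

/-- `reflectLast` as a linear isometry equivalence. -/
noncomputable def reflLI (n : ℕ) :
    EuclideanSpace ℝ (Fin n) ≃ₗᵢ[ℝ] EuclideanSpace ℝ (Fin n) where
  toFun := reflectLast n
  invFun := reflectLast n
  map_add' x y := by
    ext i
    simp only [reflectLast, PiLp.add_apply, PiLp.toLp_apply]
    split <;> ring
  map_smul' c x := by
    ext i
    simp only [reflectLast, PiLp.smul_apply, RingHom.id_apply, smul_eq_mul, PiLp.toLp_apply]
    split <;> ring
  left_inv x := by
    ext i
    simp only [reflectLast, PiLp.toLp_apply]
    split <;> simp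
  right_inv x := by
    ext i
    simp only [reflectLast, PiLp.toLp_apply]
    split <;> simp
  norm_map' x := by
    simp only [LinearEquiv.coe_mk, AddHom.coe_mk]
    rw [EuclideanSpace.norm_eq, EuclideanSpace.norm_eq]
    congr 1
    refine Finset.sum_congr rfl fun i _ => ?_
    show ‖(reflectLast n x) i‖ ^ 2 = _
    simp only [reflectLast, PiLp.toLp_apply]
    split <;> simp

lemma reflLI_apply (n : ℕ) (x : EuclideanSpace ℝ (Fin n)) :
    reflLI n x = reflectLast n x := rfl

/-- Key lemma: for an a.e.-even integrable function, the average over the ball equals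
the average over the upper half-ball. -/
lemma avg_ball_eq_avg_half {n : ℕ} (hn : 0 < n) {r : ℝ} (hr : 0 < r)
    {F : Type*} [NormedAddCommGroup F] [NormedSpace ℝ F]
    (g : EuclideanSpace ℝ (Fin n) → F)
    (hg : IntegrableOn g (ball (0 : EuclideanSpace ℝ (Fin n)) r))
    (hge : ∀ᵐ x ∂(volume.restrict (ball (0 : EuclideanSpace ℝ (Fin n)) r)),
      g (reflectLast n x) = g x) :
    (⨍ x in ball (0 : EuclideanSpace ℝ (Fin n)) r, g x)
      = ⨍ x in upperHalfBall n hn r, g x := by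
  set i₀ : Fin n := ⟨n - 1, Nat.sub_lt hn one_pos⟩ with hi₀
  set B : Set (EuclideanSpace ℝ (Fin n)) := ball 0 r with hB
  set P : Set (EuclideanSpace ℝ (Fin n)) := upperHalfBall n hn r with hPdef
  set N : Set (EuclideanSpace ℝ (Fin n)) := {x | x ∈ B ∧ x i₀ < 0} with hNdef
  have hproj : Continuous fun x : EuclideanSpace ℝ (Fin n) => x i₀ :=
    (PiLp.proj (𝕜 := ℝ) 2 (fun _ : Fin n => ℝ) i₀).continuous
  have hPopen : IsOpen P := by
    have : P = B ∩ ((fun x : EuclideanSpace ℝ (Fin n) => x i₀) ⁻¹' Set.Ioi 0) := by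
      ext x; simp [hPdef, upperHalfBall, hB, hi₀]
    rw [this]
    exact isOpen_ball.inter (isOpen_Ioi.preimage hproj)
  have hNopen : IsOpen N := by
    have : N = B ∩ ((fun x : EuclideanSpace ℝ (Fin n) => x i₀) ⁻¹' Set.Iio 0) := by
      ext x; simp [hNdef, hB]
    rw [this]
    exact isOpen_ball.inter (isOpen_Iio.preimage hproj)
  have hPsub : P ⊆ B := fun x hx => hx.1
  have hNsub : N ⊆ B := fun x hx => hx.1
  -- the reflection
  set e := reflLI n with he_def
  have hemp : MeasurePreserving (e : EuclideanSpace ℝ (Fin n) → EuclideanSpace ℝ (Fin n)) :=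
    e.measurePreserving
  have hemb : MeasurableEmbedding (e : EuclideanSpace ℝ (Fin n) → EuclideanSpace ℝ (Fin n)) :=
    e.toHomeomorph.toMeasurableEquiv.measurableEmbedding
  have hcoord : ∀ x : EuclideanSpace ℝ (Fin n), reflectLast n x i₀ = -(x i₀) := by
    intro x; simp [reflectLast, hi₀]
  have heB : ∀ x : EuclideanSpace ℝ (Fin n), (e x ∈ B ↔ x ∈ B) := by
    intro x
    simp only [hB, mem_ball_zero_iff]
    rw [e.norm_map]
  have hpre : (e : EuclideanSpace ℝ (Fin n) → EuclideanSpace ℝ (Fin n)) ⁻¹' N = P := by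
    ext x
    simp only [Set.mem_preimage, hNdef, Set.mem_setOf_eq, hPdef, upperHalfBall, ← hi₀, ← hB]
    rw [heB x, reflLI_apply, hcoord x]
    constructor
    · rintro ⟨h1, h2⟩; exact ⟨h1, by linarith⟩
    · rintro ⟨h1, h2⟩; exact ⟨h1, by linarith⟩
  have hμNP : volume N = volume P := by
    rw [← hpre, hemp.measure_preimage_emb hemb]
  -- the zero set is null
  have hZ : volume {x : EuclideanSpace ℝ (Fin n) | x i₀ = 0} = 0 := by
    have hker : LinearMap.ker (PiLp.projₗ (𝕜 := ℝ) 2 (fun _ : Fin n => ℝ) i₀) ≠ ⊤ := by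
      intro h
      have h1 : EuclideanSpace.single i₀ (1 : ℝ) ∈
          LinearMap.ker (PiLp.projₗ (𝕜 := ℝ) 2 (fun _ : Fin n => ℝ) i₀) := by
        rw [h]; trivial
      rw [LinearMap.mem_ker] at h1
      simp [PiLp.projₗ, EuclideanSpace.single_apply] at h1
    have := Measure.addHaar_submodule (volume : Measure (EuclideanSpace ℝ (Fin n)))
      (LinearMap.ker (PiLp.projₗ (𝕜 := ℝ) 2 (fun _ : Fin n => ℝ) i₀)) hker
    convert this using 2
    ext x; simp [LinearMap.mem_ker]
  have hdiff : volume (B \ (P ∪ N)) = 0 := by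
    refine measure_mono_null ?_ hZ
    rintro x ⟨hxB, hx⟩
    simp only [Set.mem_union, hPdef, upperHalfBall, hNdef, Set.mem_setOf_eq, ← hi₀, ← hB,
      not_or, not_and] at hx
    have h1 := hx.1 hxB
    have h2 := hx.2 hxB
    simp only [Set.mem_setOf_eq]
    linarith [not_lt.mp (fun h => h1 h), not_lt.mp (fun h => h2 h)]
  have haeeq : (P ∪ N : Set (EuclideanSpace ℝ (Fin n))) =ᵐ[volume] B := by
    rw [MeasureTheory.ae_eq_set]
    refine ⟨?_, hdiff⟩
    rw [Set.diff_eq_empty.mpr (Set.union_subset hPsub hNsub)]; simp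
  have hdisj : Disjoint P N := by
    rw [Set.disjoint_left]
    rintro x ⟨_, h1⟩ ⟨_, h2⟩
    rw [← hi₀] at h1
    linarith
  have hμB : volume B < ⊤ := measure_ball_lt_top
  have hμP : volume P < ⊤ := lt_of_le_of_lt (measure_mono hPsub) hμB
  -- integral over N equals integral over P
  have hgeP : ∀ᵐ x ∂(volume.restrict P), g (reflectLast n x) = g x :=
    ae_restrict_of_ae_restrict_of_subset hPsub hge
  have hIN : ∫ x in N, g x = ∫ x in P, g x := by
    rw [← hemp.setIntegral_preimage_emb hemb g N, hpre]
    exact integral_congr_ae hgeP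
  -- splitting
  have hsplitμ : volume B = 2 * volume P := by
    rw [← measure_congr haeeq, measure_union hdisj hNopen.measurableSet, hμNP, two_mul]
  have hsplitI : ∫ x in B, g x = (2 : ℝ) • ∫ x in P, g x := by
    rw [← setIntegral_congr_set haeeq,
      setIntegral_union hdisj hNopen.measurableSet (hg.mono_set hPsub) (hg.mono_set hNsub),
      hIN, two_smul]
  rw [setAverage_eq, setAverage_eq, measureReal_def, measureReal_def, hsplitμ, hsplitI, smul_smul, ENNReal.toReal_mul]
  congr 1
  rw [mul_inv]
  simp [ENNReal.toReal_ofNat]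
  ring

theorem stmt1 (n m : ℕ) (hn : 2 ≤ n) (hm : 1 ≤ m) (q : ℝ) (hq : 1 ≤ q)
    (r : ℝ) (hr : 0 < r)
    (f : EuclideanSpace ℝ (Fin n) → EuclideanSpace ℝ (Fin m))
    (hf : MemLp f (ENNReal.ofReal q)
      (volume.restrict (ball (0 : EuclideanSpace ℝ (Fin n)) r)))
    (heven : ∀ᵐ x ∂(volume.restrict (ball (0 : EuclideanSpace ℝ (Fin n)) r)),
      f (reflectLast n x) = f x) :
    (⨍ x in ball (0 : EuclideanSpace ℝ (Fin n)) r,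
        ‖f x - ⨍ y in ball (0 : EuclideanSpace ℝ (Fin n)) r, f y‖ ^ q) ^ (1 / q)
      ≤ 2 * (⨍ x in upperHalfBall n (by omega) r,
          ‖f x - ⨍ y in upperHalfBall n (by omega) r, f y‖ ^ q) ^ (1 / q)
    ∧
    (⨍ x in upperHalfBall n (by omega) r,
        ‖f x - ⨍ y in upperHalfBall n (by omega) r, f y‖ ^ q) ^ (1 / q)
      ≤ 2 * (⨍ x in ball (0 : EuclideanSpace ℝ (Fin n)) r,
          ‖f x - ⨍ y in ball (0 : EuclideanSpace ℝ (Fin n)) r, f y‖ ^ q) ^ (1 / q) := by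
  have hn0 : 0 < n := by omega
  set B : Set (EuclideanSpace ℝ (Fin n)) := ball 0 r with hB
  set P : Set (EuclideanSpace ℝ (Fin n)) := upperHalfBall n hn0 r with hP
  set c : EuclideanSpace ℝ (Fin m) := ⨍ y in B, f y with hc
  have hq0 : (0 : ℝ) < q := by linarith
  haveI : IsFiniteMeasure (volume.restrict B) :=
    ⟨by rw [Measure.restrict_apply_univ]; exact measure_ball_lt_top⟩
  have hfint : IntegrableOn f B := hf.integrable (by
    rw [ENNReal.one_le_ofReal]; exact hq)
  have hmean : (⨍ y in P, f y) = c := (avg_ball_eq_avg_half hn0 hr f hfint heven).symm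
  have hgint : IntegrableOn (fun x => ‖f x - c‖ ^ q) B := by
    have h1 := (hf.sub (memLp_const c)).integrable_norm_rpow
      (by simp [ENNReal.ofReal_eq_zero]; linarith) ENNReal.ofReal_ne_top
    rwa [ENNReal.toReal_ofReal (by linarith)] at h1
  have hgeven : ∀ᵐ x ∂(volume.restrict B),
      (fun x => ‖f x - c‖ ^ q) (reflectLast n x) = (fun x => ‖f x - c‖ ^ q) x := by
    filter_upwards [heven] with x hx
    simp [hx]
  have hgavg : (⨍ x in B, ‖f x - c‖ ^ q) = ⨍ x in P, ‖f x - c‖ ^ q :=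
    avg_ball_eq_avg_half hn0 hr _ hgint hgeven
  have base_eq : (⨍ x in P, ‖f x - ⨍ y in P, f y‖ ^ q) = ⨍ x in B, ‖f x - c‖ ^ q := by
    rw [hmean]; exact hgavg.symm
  have hA : (0 : ℝ) ≤ ⨍ x in B, ‖f x - c‖ ^ q := by
    rw [setAverage_eq]
    refine smul_nonneg (by positivity) (integral_nonneg fun x => ?_)
    exact Real.rpow_nonneg (norm_nonneg _) q
  have hA' : (0 : ℝ) ≤ (⨍ x in B, ‖f x - c‖ ^ q) ^ (1 / q) :=
    Real.rpow_nonneg hA _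
  suffices h :
      (⨍ x in B, ‖f x - c‖ ^ q) ^ (1 / q)
        ≤ 2 * (⨍ x in P, ‖f x - ⨍ y in P, f y‖ ^ q) ^ (1 / q)
      ∧ (⨍ x in P, ‖f x - ⨍ y in P, f y‖ ^ q) ^ (1 / q)
        ≤ 2 * (⨍ x in B, ‖f x - c‖ ^ q) ^ (1 / q) by
    exact h
  rw [base_eq]
  exact ⟨by linarith, by linarith⟩
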